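/- (Gauss summation theorem.) Let a, b, c ∈ ℂ with c not a nonpositive integer and Re(c − a − b) > 0. Then the series ∑_{n≥0} (a)_n (b)_n / ((c)_n · n!) converges absolutely and its sum equals Γ(c)·Γ(c − a − b) / (Γ(c − a)·Γ(c − b)), where Γ is the complex Gamma function. -/

import Mathlib

open Complex Filter Finset Topology

/-- Rising Pochhammer symbol `(a)_n = a (a+1) ⋯ (a+n-1)`. -/
noncomputable def poch (a : ℂ) (n : ℕ) : ℂ := (ascPochhammer ℂ n).eval a

lemma poch_zero (a : ℂ) : poch a 0 = 1 := by simp [poch]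

lemma poch_succ (a : ℂ) (n : ℕ) : poch a (n+1) = poch a n * (a + n) := by
  simp [poch, ascPochhammer_succ_right]

lemma poch_succ_left (a : ℂ) (n : ℕ) : poch a (n+1) = a * poch (a+1) n := by
  simp [poch, ascPochhammer_succ_left, Polynomial.eval_comp]

lemma poch_eq_prod (a : ℂ) (n : ℕ) : poch a n = ∏ j ∈ range n, (a + j) := by
  induction n with
  | zero => simp [poch_zero]
  | succ n ih => rw [poch_succ, ih, prod_range_succ]

lemma poch_ne_zero {a : ℂ} (ha : ∀ m : ℕ, a ≠ -m) (n : ℕ) : poch a n ≠ 0 := by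
  rw [poch_eq_prod]
  exact Finset.prod_ne_zero_iff.mpr fun j _ => by
    intro h; exact ha j (by linear_combination h)

lemma gammaSeq_eq (a : ℂ) (n : ℕ) :
    Complex.GammaSeq a n = (n : ℂ) ^ a * n.factorial / poch a (n+1) := by
  rw [Complex.GammaSeq, poch_eq_prod]

lemma poch_eq_gammaSeq {a : ℂ} (ha : ∀ m : ℕ, a ≠ -m) {n : ℕ} (hn : n ≠ 0) :
    poch a (n+1) = (n : ℂ) ^ a * n.factorial / Complex.GammaSeq a n := by
  have h1 : poch a (n+1) ≠ 0 := poch_ne_zero ha _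
  have h2 : (n:ℂ) ^ a * n.factorial ≠ 0 := by
    refine mul_ne_zero (fun h => ?_) ?_
    · rw [cpow_eq_zero_iff] at h
      exact hn (Nat.cast_eq_zero.mp h.1)
    · exact_mod_cast Nat.cast_ne_zero.mpr n.factorial_ne_zero
  rw [gammaSeq_eq]
  field_simp
  exact (div_self h2).symm

noncomputable def T (a b c : ℂ) (n : ℕ) : ℂ :=
  poch a n * poch b n / (poch c n * n.factorial)

lemma gammaSeq_ne_zero {a : ℂ} (ha : ∀ m : ℕ, a ≠ -m) {n : ℕ} (hn : n ≠ 0) :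
    Complex.GammaSeq a n ≠ 0 := by
  rw [gammaSeq_eq]
  have h2 : (n:ℂ) ^ a ≠ 0 := fun h => hn (Nat.cast_eq_zero.mp (cpow_eq_zero_iff _ _ |>.mp h).1)
  have h3 : (n.factorial : ℂ) ≠ 0 := Nat.cast_ne_zero.mpr n.factorial_ne_zero
  exact div_ne_zero (mul_ne_zero h2 h3) (poch_ne_zero ha _)

lemma aux_cancel (A B C F M Ga Gb Gc : ℂ) (hGa : Ga ≠ 0) (hGb : Gb ≠ 0) (hGc : Gc ≠ 0)
    (hF : F ≠ 0) (hM : M ≠ 0) (hA : A ≠ 0) (hB : B ≠ 0) (hC : C ≠ 0) :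
    Gc / (Ga * Gb) = A * F / Ga * (B * F / Gb) / (C * F / Gc * (M * F)) * M * (C / (A * B)) := by
  field_simp

lemma key_tendsto {a b c : ℂ} (ha : ∀ m : ℕ, a ≠ -m) (hb : ∀ m : ℕ, b ≠ -m)
    (hc : ∀ m : ℕ, c ≠ -m) :
    Tendsto (fun n : ℕ => T a b c (n+1) * (n+1) * (n : ℂ) ^ (c - a - b)) atTop
      (𝓝 (Gamma c / (Gamma a * Gamma b))) := by
  have h := (Complex.GammaSeq_tendsto_Gamma c).div
    ((Complex.GammaSeq_tendsto_Gamma a).mul (Complex.GammaSeq_tendsto_Gamma b))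
    (mul_ne_zero (Complex.Gamma_ne_zero ha) (Complex.Gamma_ne_zero hb))
  apply h.congr'
  filter_upwards [eventually_ge_atTop 1] with n hn
  have hn0 : n ≠ 0 := by omega
  have hN : (n:ℂ) ≠ 0 := Nat.cast_ne_zero.mpr hn0
  have hpow : (n:ℂ)^a * (n:ℂ)^b * (n:ℂ)^(c-a-b) = (n:ℂ)^c := by
    rw [← cpow_add _ _ hN, ← cpow_add _ _ hN]; ring_nf
  have hGa := gammaSeq_ne_zero ha hn0
  have hGb := gammaSeq_ne_zero hb hn0
  have hGc := gammaSeq_ne_zero hc hn0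
  have hF : (n.factorial : ℂ) ≠ 0 := Nat.cast_ne_zero.mpr n.factorial_ne_zero
  have hF1 : ((n+1).factorial : ℂ) = (n+1) * n.factorial := by
    rw [Nat.factorial_succ]; push_cast; ring
  have hN1 : ((n:ℂ)+1) ≠ 0 := by
    have : ((n+1:ℕ):ℂ) ≠ 0 := Nat.cast_ne_zero.mpr (Nat.succ_ne_zero n)
    push_cast at this; exact this
  have hca : (n:ℂ)^a ≠ 0 := fun h' => hN (cpow_eq_zero_iff _ _ |>.mp h').1
  have hcb : (n:ℂ)^b ≠ 0 := fun h' => hN (cpow_eq_zero_iff _ _ |>.mp h').1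
  have hcc : (n:ℂ)^c ≠ 0 := fun h' => hN (cpow_eq_zero_iff _ _ |>.mp h').1
  have hpow' : (n:ℂ)^(c-a-b) = (n:ℂ)^c/((n:ℂ)^a*(n:ℂ)^b) := by
    rw [eq_div_iff (mul_ne_zero hca hcb)]; linear_combination hpow
  rw [show ((n:ℕ)+1 : ℂ) = (n:ℂ)+1 by push_cast; ring]
  simp only [T, poch_eq_gammaSeq ha hn0, poch_eq_gammaSeq hb hn0, poch_eq_gammaSeq hc hn0,
    hF1, hpow']
  obtain ⟨m, hm0, hm⟩ : ∃ m : ℂ, m ≠ 0 ∧ (n:ℂ)+1 = m := ⟨_, hN1, rfl⟩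
  rw [hm]
  simp only [Pi.div_apply]
  exact aux_cancel _ _ _ _ _ _ _ _ hGa hGb hGc hF hm0 hca hcb hcc

lemma tendsto_cpow_neg_zero {w : ℂ} (hw : 0 < w.re) :
    Tendsto (fun n : ℕ => (n:ℂ) ^ (-w)) atTop (𝓝 0) := by
  rw [tendsto_zero_iff_norm_tendsto_zero]
  have h1 : Tendsto (fun n : ℕ => (n:ℝ) ^ (-w.re)) atTop (𝓝 0) :=
    (tendsto_rpow_neg_atTop hw).comp tendsto_natCast_atTop_atTop
  apply h1.congr'
  filter_upwards [eventually_ge_atTop 1] with n hn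
  have hn' : (0:ℝ) < n := by exact_mod_cast hn
  rw [show ((n:ℕ):ℂ) = ((n:ℝ):ℂ) by push_cast; ring,
    norm_cpow_eq_rpow_re_of_pos hn']
  simp

lemma tendsto_T_mul {a b c : ℂ} (ha : ∀ m : ℕ, a ≠ -m) (hb : ∀ m : ℕ, b ≠ -m)
    (hc : ∀ m : ℕ, c ≠ -m) (h : 0 < (c - a - b).re) :
    Tendsto (fun n : ℕ => T a b c (n+1) * (n+1)) atTop (𝓝 0) := by
  have hk := (key_tendsto ha hb hc).mul (tendsto_cpow_neg_zero h)
  rw [mul_zero] at hk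
  apply hk.congr'
  filter_upwards [eventually_ge_atTop 1] with n hn
  have hN : (n:ℂ) ≠ 0 := Nat.cast_ne_zero.mpr (by omega)
  have hcz : (n:ℂ) ^ (c-a-b) ≠ 0 := fun h' => hN (cpow_eq_zero_iff _ _ |>.mp h').1
  rw [mul_assoc, cpow_neg, mul_inv_cancel₀ hcz, mul_one]

lemma summable_T_of_ne {a b c : ℂ} (ha : ∀ m : ℕ, a ≠ -m) (hb : ∀ m : ℕ, b ≠ -m)
    (hc : ∀ m : ℕ, c ≠ -m) (h : 0 < (c - a - b).re) :
    Summable (fun n : ℕ => ‖T a b c n‖) := by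
  rw [← summable_nat_add_iff 1]
  have hg : Summable (fun n : ℕ => (n:ℝ) ^ (-1 - (c-a-b).re)) :=
    Real.summable_nat_rpow.mpr (by linarith)
  apply summable_of_isBigO_nat hg
  obtain ⟨C, hC⟩ : ∃ C, ∀ᶠ n : ℕ in atTop,
      ‖T a b c (n+1) * (n+1) * (n:ℂ) ^ (c-a-b)‖ ≤ C :=
    ⟨‖Gamma c / (Gamma a * Gamma b)‖ + 1,
      (key_tendsto ha hb hc).norm.eventually_le_const (lt_add_one _)⟩
  rw [Asymptotics.isBigO_iff]
  refine ⟨C, ?_⟩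
  filter_upwards [hC, eventually_ge_atTop 1] with n hn hn1
  have hn' : (0:ℝ) < n := by exact_mod_cast hn1
  have habs : ‖T a b c (n+1) * (n+1) * (n:ℂ) ^ (c-a-b)‖
      = ‖T a b c (n+1)‖ * ((n:ℝ)+1) * (n:ℝ) ^ (c-a-b).re := by
    have h1 : ‖(n:ℂ) + 1‖ = (n:ℝ) + 1 := by
      rw [show ((n:ℂ)+1) = (((n:ℝ)+1 : ℝ) : ℂ) by push_cast; ring, Complex.norm_real, Real.norm_eq_abs,
        _root_.abs_of_pos (by positivity)]
    rw [norm_mul, norm_mul, h1,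
      show ((n:ℕ):ℂ) = ((n:ℝ):ℂ) by push_cast; ring, norm_cpow_eq_rpow_re_of_pos hn']
  rw [habs] at hn
  have hTnn : 0 ≤ ‖T a b c (n+1)‖ := norm_nonneg _
  have hpow : (0:ℝ) < (n:ℝ) ^ (c-a-b).re := Real.rpow_pos_of_pos hn' _
  have h2 : ‖T a b c (n+1)‖ * (n:ℝ) * (n:ℝ)^(c-a-b).re ≤ C := by
    refine le_trans ?_ hn
    have := mul_le_mul_of_nonneg_right
      (mul_le_mul_of_nonneg_left (show (n:ℝ) ≤ (n:ℝ)+1 by linarith) hTnn) hpow.le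
    linarith
  have step : ‖T a b c (n+1)‖ * (n:ℝ) ≤ C * ((n:ℝ) ^ (c-a-b).re)⁻¹ := by
    calc ‖T a b c (n+1)‖ * (n:ℝ)
        = (‖T a b c (n+1)‖ * (n:ℝ) * (n:ℝ)^(c-a-b).re)
            * ((n:ℝ)^(c-a-b).re)⁻¹ := by field_simp
      _ ≤ C * ((n:ℝ)^(c-a-b).re)⁻¹ := mul_le_mul_of_nonneg_right h2 (by positivity)
  have final : ‖T a b c (n+1)‖ ≤ C * (n:ℝ) ^ (-1-(c-a-b).re) := by
    have hrw : (n:ℝ) ^ (-1-(c-a-b).re) = ((n:ℝ) ^ (c-a-b).re)⁻¹ * ((n:ℝ))⁻¹ := by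
      rw [← Real.rpow_neg hn'.le, ← Real.rpow_neg_one ((n:ℝ)), ← Real.rpow_add hn']
      ring_nf
    rw [hrw, ← mul_assoc]
    calc ‖T a b c (n+1)‖
        = ‖T a b c (n+1)‖ * (n:ℝ) * ((n:ℝ))⁻¹ := by field_simp
      _ ≤ C * ((n:ℝ) ^ (c-a-b).re)⁻¹ * ((n:ℝ))⁻¹ :=
          mul_le_mul_of_nonneg_right step (by positivity)
  rw [Real.norm_eq_abs, Real.norm_eq_abs, _root_.abs_of_nonneg hTnn,
    _root_.abs_of_nonneg (Real.rpow_nonneg hn'.le _)]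
  exact final

lemma poch_eq_zero_of_neg_nat {a : ℂ} {k n : ℕ} (hk : a = -k) (hn : k < n) : poch a n = 0 := by
  rw [poch_eq_prod]
  apply Finset.prod_eq_zero (Finset.mem_range.mpr hn)
  rw [hk]; ring

lemma summable_T (a b c : ℂ) (hc : ∀ m : ℕ, c ≠ -m) (h : 0 < (c - a - b).re) :
    Summable (fun n : ℕ => ‖T a b c n‖) := by
  by_cases ha : ∀ m : ℕ, a ≠ -m
  · by_cases hb : ∀ m : ℕ, b ≠ -m
    · exact summable_T_of_ne ha hb hc h
    · push_neg at hb; obtain ⟨k, hk⟩ := hb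
      apply summable_of_ne_finset_zero (s := Finset.range (k+1))
      intro n hn
      have hlt : k < n := by simpa using hn
      simp [T, poch_eq_zero_of_neg_nat hk hlt]
  · push_neg at ha; obtain ⟨k, hk⟩ := ha
    apply summable_of_ne_finset_zero (s := Finset.range (k+1))
    intro n hn
    have hlt : k < n := by simpa using hn
    simp [T, poch_eq_zero_of_neg_nat hk hlt]

lemma tendsto_d (a b c : ℂ) (hc : ∀ m : ℕ, c ≠ -m) (h : 0 < (c - a - b).re) :
    Tendsto (fun n : ℕ => T a b c n * n) atTop (𝓝 0) := by
  rw [← tendsto_add_atTop_iff_nat 1]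
  by_cases ha : ∀ m : ℕ, a ≠ -m
  · by_cases hb : ∀ m : ℕ, b ≠ -m
    · have := tendsto_T_mul ha hb hc h
      apply this.congr
      intro n; push_cast; ring
    · push_neg at hb; obtain ⟨k, hk⟩ := hb
      refine Tendsto.congr' ?_ tendsto_const_nhds
      filter_upwards [eventually_ge_atTop k] with n hn
      simp [T, poch_eq_zero_of_neg_nat hk (Nat.lt_succ_of_le hn)]
  · push_neg at ha; obtain ⟨k, hk⟩ := ha
    refine Tendsto.congr' ?_ tendsto_const_nhds
    filter_upwards [eventually_ge_atTop k] with n hn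
    simp [T, poch_eq_zero_of_neg_nat hk (Nat.lt_succ_of_le hn)]

lemma tele (a b c : ℂ) (hc : ∀ m : ℕ, c ≠ -m) (n : ℕ) :
    c*(c-a-b) * T a b c n - (c-a)*(c-b) * T a b (c+1) n
      = c * T a b c n * n - c * T a b c (n+1) * (n+1) := by
  have hc0 : c ≠ 0 := by simpa using hc 0
  have hcn : c + n ≠ 0 := fun h' => hc n (by linear_combination h')
  have hR : poch c n ≠ 0 := poch_ne_zero hc n
  have hF : (n.factorial : ℂ) ≠ 0 := Nat.cast_ne_zero.mpr n.factorial_ne_zero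
  have hpoch1 : poch (c+1) n = poch c n * (c + n) / c := by
    rw [eq_div_iff hc0]
    have := poch_succ_left c n
    rw [poch_succ] at this
    linear_combination -this
  have hF1 : ((n+1).factorial : ℂ) = ((n:ℂ)+1) * n.factorial := by
    rw [Nat.factorial_succ]; push_cast; ring
  have hN1 : ((n:ℂ)+1) ≠ 0 := by
    have : ((n+1:ℕ):ℂ) ≠ 0 := Nat.cast_ne_zero.mpr (Nat.succ_ne_zero n)
    push_cast at this; exact this
  simp only [T, poch_succ, hpoch1, hF1]
  rw [show ((n:ℕ)+1 : ℂ) = (n:ℂ)+1 by push_cast; ring]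
  obtain ⟨m, hm0, hm⟩ : ∃ m : ℂ, m ≠ 0 ∧ (n:ℂ)+1 = m := ⟨_, hN1, rfl⟩
  rw [hm]
  field_simp
  ring

lemma hc_succ {c : ℂ} (hc : ∀ m : ℕ, c ≠ -m) : ∀ m : ℕ, c + 1 ≠ -m :=
  fun m hm => hc (m+1) (by push_cast; linear_combination hm)

lemma re_succ (a b c : ℂ) : (c + 1 - a - b).re = (c - a - b).re + 1 := by
  simp [Complex.add_re, Complex.sub_re, Complex.one_re]
  ring

lemma summable_T' (a b c : ℂ) (hc : ∀ m : ℕ, c ≠ -m) (h : 0 < (c - a - b).re) :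
    Summable (T a b c) := by
  apply Summable.of_norm
  simpa using summable_T a b c hc h

lemma contiguous (a b c : ℂ) (hc : ∀ m : ℕ, c ≠ -m) (h : 0 < (c - a - b).re) :
    c * (c-a-b) * ∑' n, T a b c n = (c-a) * (c-b) * ∑' n, T a b (c+1) n := by
  have hc1 := hc_succ hc
  have h1 : 0 < (c+1-a-b).re := by rw [re_succ]; linarith
  have S1 := summable_T' a b c hc h
  have S2 := summable_T' a b (c+1) hc1 h1
  have hsum := (S1.hasSum.mul_left (c*(c-a-b))).sub (S2.hasSum.mul_left ((c-a)*(c-b)))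
  have htel := hsum.tendsto_sum_nat
  have hps : ∀ N, ∑ n ∈ range N, (c*(c-a-b) * T a b c n - (c-a)*(c-b) * T a b (c+1) n)
      = c * T a b c 0 * (0:ℕ) - c * T a b c N * N := by
    intro N
    rw [← Finset.sum_range_sub' (fun n => c * T a b c n * n) N]
    apply Finset.sum_congr rfl
    intro n _
    rw [tele a b c hc n]
    push_cast; ring
  rw [show (fun N => ∑ n ∈ range N, (c*(c-a-b) * T a b c n - (c-a)*(c-b) * T a b (c+1) n))
      = fun N => c * T a b c 0 * (0:ℕ) - c * T a b c N * N from funext hps] at htel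
  have hzero : Tendsto (fun N : ℕ => c * T a b c 0 * (0:ℕ) - c * T a b c N * N)
      atTop (𝓝 0) := by
    have := (tendsto_d a b c hc h).const_mul c
    simpa [mul_assoc] using (tendsto_const_nhds (x := c * T a b c 0 * ((0:ℕ):ℂ))).sub this
  have := tendsto_nhds_unique htel hzero
  linear_combination this

lemma hc_add {c : ℂ} (hc : ∀ m : ℕ, c ≠ -m) (m : ℕ) : ∀ k : ℕ, c + m ≠ -k :=
  fun k hk => hc (m+k) (by push_cast; linear_combination hk)

lemma re_add (a b c : ℂ) (m : ℕ) : (c + m - a - b).re = (c - a - b).re + m := by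
  simp [Complex.add_re, Complex.sub_re, Complex.natCast_re]
  ring

lemma iterated (a b c : ℂ) (hc : ∀ m : ℕ, c ≠ -m) (h : 0 < (c - a - b).re) (m : ℕ) :
    poch (c-a) m * poch (c-b) m * ∑' n, T a b (c+m) n
      = poch c m * poch (c-a-b) m * ∑' n, T a b c n := by
  induction m with
  | zero => simp [poch_zero]
  | succ m ih =>
    have hcm := hc_add hc m
    have hm : 0 < (c + m - a - b).re := by rw [re_add]; positivity
    have hcont := contiguous a b (c+m) hcm hm
    rw [show (c + ((m+1:ℕ):ℂ)) = (c+(m:ℂ))+1 from by push_cast; ring]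
    rw [poch_succ, poch_succ, poch_succ, poch_succ]
    linear_combination (-(poch (c-a) m * poch (c-b) m)) * hcont
      + ((c+(m:ℂ))*((c+(m:ℂ))-a-b)) * ih

lemma T_zero (a b c : ℂ) : T a b c 0 = 1 := by simp [T, poch_zero]

lemma abs_poch_le (a : ℂ) (n : ℕ) :
    ‖poch a n‖ ≤ ∏ j ∈ range n, (‖a‖ + j) := by
  rw [poch_eq_prod, norm_prod]
  apply Finset.prod_le_prod (fun _ _ => norm_nonneg _)
  intro j _
  calc ‖a + j‖ ≤ ‖a‖ + ‖(j:ℂ)‖ := norm_add_le _ _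
    _ = ‖a‖ + j := by rw [Complex.norm_natCast]

lemma abs_poch_real {x : ℝ} (hx : 0 ≤ x) (n : ℕ) :
    ‖poch (x:ℂ) n‖ = ∏ j ∈ range n, (x + j) := by
  rw [poch_eq_prod, norm_prod]
  apply Finset.prod_congr rfl
  intro j _
  rw [show ((x:ℂ) + j) = (((x + j : ℝ)):ℂ) by push_cast; ring, Complex.norm_real, Real.norm_eq_abs,
    _root_.abs_of_nonneg (by positivity)]

lemma abs_poch_ge (c : ℂ) (m : ℕ) (r : ℝ) (h1 : r + 1 ≤ c.re + m) (hr : 0 ≤ r) (n : ℕ) :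
    (c.re + m) * ∏ j ∈ range n, (r + 1 + j) ≤ ‖poch (c + m) (n+1)‖ := by
  have hcm : 0 < c.re + m := by linarith
  rw [poch_eq_prod, Finset.prod_range_succ', norm_mul, norm_prod]
  have h0 : c.re + m ≤ ‖c + (m:ℂ) + (0:ℕ)‖ := by
    refine le_trans ?_ (Complex.re_le_norm _)
    simp [Complex.add_re, Complex.natCast_re]
  have hprod : ∏ j ∈ range n, (r + 1 + j) ≤ ∏ j ∈ range n, ‖c + m + (j+1:ℕ)‖ := by
    apply Finset.prod_le_prod (fun _ _ => by positivity)
    intro j _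
    refine le_trans ?_ (Complex.re_le_norm _)
    push_cast
    simp only [Complex.add_re, Complex.natCast_re, Complex.one_re]
    linarith
  calc (c.re + m) * ∏ j ∈ range n, (r + 1 + j)
      ≤ ‖c + (m:ℂ) + (0:ℕ)‖ * ∏ j ∈ range n, ‖c + m + (j+1:ℕ)‖ := by
        apply mul_le_mul h0 hprod (by positivity) (norm_nonneg _)
    _ = (∏ j ∈ range n, ‖c + m + (j+1:ℕ)‖) * ‖c + (m:ℂ) + (0:ℕ)‖ := by
        ring


lemma div_bound_aux {N1 N2 M1 M2 D P f K x : ℝ}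
    (hN : N1 ≤ N2) (hN1 : 0 ≤ N1) (hD : x * P ≤ D) (hx : 0 < x)
    (hP : 0 < P) (hf : 0 < f) (hK : 0 < K)
    (hM : M1 ≤ M2) (hM1 : 0 ≤ M1) (hN2 : 0 ≤ N2) :
    N1 * M1 / (D * f) ≤ K / x * (N2 * M2 / (K * P * f)) := by
  have hD0 : 0 < D := lt_of_lt_of_le (mul_pos hx hP) hD
  have hM2 : 0 ≤ M2 := le_trans hM1 hM
  rw [div_mul_div_comm, div_le_div_iff₀ (by positivity) (by positivity)]
  have h2 : N1 * M1 * (x * P) ≤ N2 * M2 * D :=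
    mul_le_mul (mul_le_mul hN hM hM1 hN2) hD (by positivity)
      (by positivity)
  nlinarith [mul_le_mul_of_nonneg_right h2 (show 0 ≤ K * f by positivity)]

set_option maxHeartbeats 2000000 in
lemma tendsto_tail (a b c : ℂ) (hc : ∀ m : ℕ, c ≠ -m) (h : 0 < (c - a - b).re) :
    Tendsto (fun m : ℕ => ∑' n, T a b (c + m) n) atTop (𝓝 1) := by
  set A := ‖a‖ with hA
  set B := ‖b‖ with hB
  have hA0 : 0 ≤ A := norm_nonneg _
  have hB0 : 0 ≤ B := norm_nonneg _
  set α : ℂ := ((A:ℝ):ℂ) with hα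
  set β : ℂ := ((B:ℝ):ℂ) with hβ
  set ρ : ℂ := ((A+B+2 : ℝ):ℂ) with hρ
  have hρc : ∀ m : ℕ, ρ ≠ -m := by
    intro m hm
    have := congrArg Complex.re hm
    simp only [hρ, Complex.ofReal_re, Complex.neg_re, Complex.natCast_re] at this
    have hm0 : (0:ℝ) ≤ m := Nat.cast_nonneg m
    linarith
  have hρh : 0 < (ρ - α - β).re := by
    simp only [hρ, hα, hβ, Complex.sub_re, Complex.ofReal_re]
    linarith
  have hSu : Summable (fun n => ‖T α β ρ n‖) := summable_T _ _ _ hρc hρh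
  have hSu1 : Summable (fun n => ‖T α β ρ (n+1)‖) :=
    (summable_nat_add_iff 1).mpr hSu
  set U := ∑' n, ‖T α β ρ (n+1)‖ with hU
  -- the key pointwise bound
  have key : ∀ m : ℕ, (A + B + 2 : ℝ) + 1 ≤ c.re + m →
      ‖(∑' n, T a b (c + m) n) - 1‖ ≤ (A+B+2) * U / (c.re + m) := by
    intro m hm
    have hcm := hc_add hc m
    have hmre : 0 < (c + m - a - b).re := by rw [re_add]; positivity
    have hcmpos : (0:ℝ) < c.re + m := by linarith
    have hS := summable_T' a b (c+m) hcm hmre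
    have habs := summable_T a b (c+m) hcm hmre
    have habs1 : Summable (fun n => ‖T a b (c+m) (n+1)‖) :=
      (summable_nat_add_iff 1).mpr habs
    rw [hS.tsum_eq_zero_add, T_zero, add_sub_cancel_left]
    have h1 : ‖∑' n, T a b (c+m) (n+1)‖
        ≤ ∑' n, ‖T a b (c+m) (n+1)‖ := by
      simpa using norm_tsum_le_tsum_norm
        (f := fun n => T a b (c+m) (n+1)) (by simpa using habs1)
    refine h1.trans ?_
    have hbound : ∀ n : ℕ, ‖T a b (c+m) (n+1)‖
        ≤ (A+B+2)/(c.re+m) * ‖T α β ρ (n+1)‖ := by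
      intro n
      have hξ : ρ + 1 = ((A+B+3 : ℝ) : ℂ) := by rw [hρ]; push_cast; ring
      have hpρ : ‖poch ρ (n+1)‖ = (A+B+2) * ∏ j ∈ range n, (A+B+3+j) := by
        rw [poch_succ_left, norm_mul, hξ, abs_poch_real (by linarith)]
        congr 1
        · rw [hρ, Complex.norm_real, Real.norm_eq_abs, _root_.abs_of_nonneg (by linarith)]
      have hpα : ‖poch α (n+1)‖ = ∏ j ∈ range (n+1), (A+j) :=
        abs_poch_real hA0 (n+1)
      have hpβ : ‖poch β (n+1)‖ = ∏ j ∈ range (n+1), (B+j) :=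
        abs_poch_real hB0 (n+1)
      have hnum_a : ‖poch a (n+1)‖ ≤ ∏ j ∈ range (n+1), (A+j) :=
        abs_poch_le a (n+1)
      have hnum_b : ‖poch b (n+1)‖ ≤ ∏ j ∈ range (n+1), (B+j) :=
        abs_poch_le b (n+1)
      have hden : (c.re + m) * ∏ j ∈ range n, ((A+B+2) + 1 + j)
          ≤ ‖poch (c + m) (n+1)‖ := abs_poch_ge c m (A+B+2) hm (by linarith) n
      have hfac : (0:ℝ) < ((n+1).factorial : ℝ) := by positivity
      have hTa : ‖T a b (c+m) (n+1)‖ = ‖poch a (n+1)‖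
          * ‖poch b (n+1)‖
          / (‖poch (c+m) (n+1)‖ * ((n+1).factorial : ℝ)) := by
        simp [T, norm_div, norm_mul, Complex.norm_natCast]
      have hTρ : ‖T α β ρ (n+1)‖ = ‖poch α (n+1)‖
          * ‖poch β (n+1)‖
          / (‖poch ρ (n+1)‖ * ((n+1).factorial : ℝ)) := by
        simp [T, norm_div, norm_mul, Complex.norm_natCast]
      have hden' : (c.re + (m:ℝ)) * ∏ j ∈ range n, ((A+B+2)+1+(j:ℝ))
          ≤ ‖poch (c+m) (n+1)‖ := hden
      rw [hTa, hTρ, hpα, hpβ, hpρ]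
      rw [show (∏ j ∈ range n, (A+B+3+(j:ℝ))) = ∏ j ∈ range n, ((A+B+2)+1+(j:ℝ)) from
        Finset.prod_congr rfl (fun j _ => by ring)]
      exact div_bound_aux hnum_a (norm_nonneg _) hden' hcmpos
        (by positivity) (by positivity) (by positivity)
        hnum_b (norm_nonneg _) (by positivity)
    calc ∑' n, ‖T a b (c+m) (n+1)‖
        ≤ ∑' n, (A+B+2)/(c.re+m) * ‖T α β ρ (n+1)‖ :=
          Summable.tsum_le_tsum hbound habs1 (hSu1.mul_left _)
      _ = (A+B+2) * U / (c.re+m) := by rw [tsum_mul_left, hU]; ring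
  -- conclude
  obtain ⟨M, hM⟩ := exists_nat_ge (A + B + 3 - c.re)
  rw [tendsto_iff_norm_sub_tendsto_zero]
  have hq : Tendsto (fun m : ℕ => (A+B+2) * U / (c.re + m)) atTop (𝓝 0) := by
    apply Tendsto.div_atTop tendsto_const_nhds
    exact tendsto_atTop_add_const_left _ _ tendsto_natCast_atTop_atTop
  apply squeeze_zero' ?_ ?_ hq
  · filter_upwards with m
    exact norm_nonneg _
  · filter_upwards [eventually_ge_atTop M] with m hm
    have hMm : (M:ℝ) ≤ m := Nat.cast_le.mpr hm
    have hle : A + B + 2 + 1 ≤ c.re + m := by linarith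
    simpa using key m hle

lemma aux_cancel2 (C D E F X Gc Gd Ge Gf : ℂ) (hGc : Gc ≠ 0) (hGd : Gd ≠ 0)
    (hGe : Ge ≠ 0) (hGf : Gf ≠ 0) (hX : X ≠ 0) (hC : C ≠ 0) (hD : D ≠ 0)
    (hEF : E * F = C * D) :
    Gc * Gd / (Ge * Gf) = E * X / Ge * (F * X / Gf) / (C * X / Gc * (D * X / Gd)) := by
  have h1 : E * F ≠ 0 := by rw [hEF]; exact mul_ne_zero hC hD
  have hE : E ≠ 0 := fun h' => h1 (by rw [h']; ring)
  have hF : F ≠ 0 := fun h' => h1 (by rw [h']; ring)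
  field_simp
  linear_combination (-1 : ℂ) * hEF

lemma hcab_ne {a b c : ℂ} (h : 0 < (c - a - b).re) : ∀ k : ℕ, c - a - b ≠ -k := by
  intro k hk
  rw [hk] at h
  simp only [Complex.neg_re, Complex.natCast_re] at h
  linarith [Nat.cast_nonneg (α := ℝ) k]

lemma tendsto_Q (a b c : ℂ) (hc : ∀ m : ℕ, c ≠ -m) (h : 0 < (c - a - b).re) :
    Tendsto (fun m : ℕ => poch (c-a) m * poch (c-b) m / (poch c m * poch (c-a-b) m)) atTop
      (𝓝 (Gamma c * Gamma (c-a-b) / (Gamma (c-a) * Gamma (c-b)))) := by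
  have hcab := hcab_ne h
  by_cases hca : ∀ k : ℕ, c - a ≠ -k
  · by_cases hcb : ∀ k : ℕ, c - b ≠ -k
    · have hlim := ((Complex.GammaSeq_tendsto_Gamma c).mul
        (Complex.GammaSeq_tendsto_Gamma (c-a-b))).div
        ((Complex.GammaSeq_tendsto_Gamma (c-a)).mul (Complex.GammaSeq_tendsto_Gamma (c-b)))
        (mul_ne_zero (Complex.Gamma_ne_zero hca) (Complex.Gamma_ne_zero hcb))
      rw [← tendsto_add_atTop_iff_nat 1]
      apply hlim.congr'
      filter_upwards [eventually_ge_atTop 1] with n hn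
      have hn0 : n ≠ 0 := by omega
      have hN : (n:ℂ) ≠ 0 := Nat.cast_ne_zero.mpr hn0
      have hF : (n.factorial : ℂ) ≠ 0 := Nat.cast_ne_zero.mpr n.factorial_ne_zero
      have hpowne : ∀ z : ℂ, (n:ℂ)^z ≠ 0 := fun z h' => hN (cpow_eq_zero_iff _ _ |>.mp h').1
      have hEF : (n:ℂ)^(c-a) * (n:ℂ)^(c-b) = (n:ℂ)^c * (n:ℂ)^(c-a-b) := by
        rw [← cpow_add _ _ hN, ← cpow_add _ _ hN]
        congr 1; ring
      rw [poch_eq_gammaSeq hca hn0, poch_eq_gammaSeq hcb hn0, poch_eq_gammaSeq hc hn0,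
        poch_eq_gammaSeq hcab hn0]
      exact aux_cancel2 _ _ _ _ _ _ _ _ _ (gammaSeq_ne_zero hc hn0)
        (gammaSeq_ne_zero hcab hn0) (gammaSeq_ne_zero hca hn0) (gammaSeq_ne_zero hcb hn0)
        hF (hpowne c) (hpowne (c-a-b)) hEF
    · push_neg at hcb; obtain ⟨k, hk⟩ := hcb
      rw [show Gamma (c-b) = 0 from hk ▸ Complex.Gamma_neg_nat_eq_zero k, mul_zero, div_zero]
      refine Tendsto.congr' ?_ tendsto_const_nhds
      filter_upwards [eventually_ge_atTop (k+1)] with m hm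
      rw [poch_eq_zero_of_neg_nat hk (by omega)]
      simp
  · push_neg at hca; obtain ⟨k, hk⟩ := hca
    rw [show Gamma (c-a) = 0 from hk ▸ Complex.Gamma_neg_nat_eq_zero k, zero_mul, div_zero]
    refine Tendsto.congr' ?_ tendsto_const_nhds
    filter_upwards [eventually_ge_atTop (k+1)] with m hm
    rw [poch_eq_zero_of_neg_nat hk (by omega)]
    simp


/-- Gauss summation theorem: if `c` is not a nonpositive integer and
`Re (c - a - b) > 0`, then `∑ (a)_n (b)_n / ((c)_n n!)` converges absolutely
with sum `Γ(c) Γ(c-a-b) / (Γ(c-a) Γ(c-b))`. -/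
theorem gauss_summation (a b c : ℂ) (hc : ∀ m : ℕ, c ≠ -(m : ℂ))
    (h : 0 < (c - a - b).re) :
    Summable (fun n : ℕ =>
      ‖poch a n * poch b n / (poch c n * (n.factorial : ℂ))‖) ∧
    ∑' n : ℕ, poch a n * poch b n / (poch c n * (n.factorial : ℂ)) =
      Complex.Gamma c * Complex.Gamma (c - a - b) /
        (Complex.Gamma (c - a) * Complex.Gamma (c - b)) := by
  have hcab := hcab_ne h
  refine ⟨summable_T a b c hc h, ?_⟩
  have hconst : ∀ m : ℕ, poch (c-a) m * poch (c-b) m / (poch c m * poch (c-a-b) m)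
      * ∑' n, T a b (c+m) n = ∑' n, T a b c n := by
    intro m
    have h1 : poch c m ≠ 0 := poch_ne_zero hc m
    have h2 : poch (c-a-b) m ≠ 0 := poch_ne_zero hcab m
    rw [div_mul_eq_mul_div, iterated a b c hc h m,
      mul_div_cancel_left₀ _ (mul_ne_zero h1 h2)]
  have hlim := (tendsto_Q a b c hc h).mul (tendsto_tail a b c hc h)
  rw [mul_one] at hlim
  rw [show (fun m : ℕ => poch (c-a) m * poch (c-b) m / (poch c m * poch (c-a-b) m)
      * ∑' n, T a b (c+m) n) = fun _ => ∑' n, T a b c n from funext hconst] at hlim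
  exact tendsto_nhds_unique tendsto_const_nhds hlim
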